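/- Let n ≥ 2 and let x = (x_2,…,x_{2n−1}) be nonzero complex numbers such that T_k(x) ≠ 0 for 1 ≤ k ≤ n−1, and let y = y(x). Then y_n(x)²/(y_1(x)·y_{n+1}(x)) = 1/(x_n·x_{n+1}) and y_{n+1}(x)/y_n(x) = x_{n+1}·∑_{k=2}^{n} x_k/x_{n+k−1}. (That is, under the birational map y(x) the functions ȳγ_0(y) = y_n²/(y_1 y_{n+1}) and ε̄_0(y) = y_{n+1}/y_n pull back to γ_0(x) = 1/(x_n x_{n+1}) and ε_0(x) = x_{n+1}·∑_{k=2}^{n} x_k/x_{n+k−1}.) -/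

import Mathlib

noncomputable section

/-- `Tf n x k = ∑_{j=k+1}^{n} x_j / x_{n+j-1}` (so `Tf n x n = 0`). -/
def Tf (n : ℕ) (x : ℕ → ℂ) (k : ℕ) : ℂ :=
  ∑ j ∈ Finset.Icc (k + 1) n, x j / x (n + j - 1)

/-- The map `x ↦ y(x)`:
`y_1 = T_1(x)⁻¹`, `y_k = x_k·T_k(x)⁻¹` for `2 ≤ k ≤ n-1`, `y_n = x_n⁻¹`,
`y_{n+l} = (x_{n+l}/x_n)·T_l(x)` for `1 ≤ l ≤ n-2`. -/
def yOf (n : ℕ) (x : ℕ → ℂ) (k : ℕ) : ℂ :=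
  if k = 1 then (Tf n x 1)⁻¹
  else if k ≤ n - 1 then x k * (Tf n x k)⁻¹
  else if k = n then (x n)⁻¹
  else (x k / x n) * Tf n x (k - n)

/-- `ȳγ_0` and `ε̄_0` pull back along `y(x)` to
`γ_0(x) = 1/(x_n x_{n+1})` and `ε_0(x) = x_{n+1}·∑_{k=2}^{n} x_k/x_{n+k-1}`. -/
theorem stmt3 (n : ℕ) (hn : 2 ≤ n) (x : ℕ → ℂ)
    (hx : ∀ k, 2 ≤ k → k ≤ 2 * n - 1 → x k ≠ 0)
    (hT : ∀ k, 1 ≤ k → k ≤ n - 1 → Tf n x k ≠ 0) :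
    (yOf n x n) ^ 2 / (yOf n x 1 * yOf n x (n + 1)) = 1 / (x n * x (n + 1)) ∧
    yOf n x (n + 1) / yOf n x n
      = x (n + 1) * ∑ k ∈ Finset.Icc 2 n, x k / x (n + k - 1) := by
  have hxn : x n ≠ 0 := hx n hn (by omega)
  have hxn1 : x (n + 1) ≠ 0 := hx (n + 1) (by omega) (by omega)
  have hT1 : Tf n x 1 ≠ 0 := hT 1 le_rfl (by omega)
  have hy1 : yOf n x 1 = (Tf n x 1)⁻¹ := by simp [yOf]
  have hyn : yOf n x n = (x n)⁻¹ := by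
    unfold yOf
    rw [if_neg (by omega), if_neg (by omega), if_pos rfl]
  have hyn1 : yOf n x (n + 1) = (x (n + 1) / x n) * Tf n x 1 := by
    unfold yOf
    rw [if_neg (by omega), if_neg (by omega), if_neg (by omega)]
    simp
  constructor
  · rw [hy1, hyn, hyn1]
    field_simp
  · rw [hyn, hyn1]
    have : Tf n x 1 = ∑ k ∈ Finset.Icc 2 n, x k / x (n + k - 1) := rfl
    rw [← this]
    field_simp
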